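/- Let A = (a_{ij}) be an n-by-n Ferrers matrix with a_{nn} = 0, let k ≥ 1 be the number of 0's in the last column of A, and let A° be the (n−1)-by-(n−1) matrix obtained from A by deleting its last row and last column. Then, with α an indeterminate, per(B(A); α) = (α + k − 1)·x_n·per(B(A°); α) + x_n·y_n·∂ per(B(A°); α), where ∂ = Σ_{i=1}^{n−k} ∂/∂x_i + Σ_{j=1}^{n−1} ∂/∂y_j. -/

import Mathlib

open MvPolynomial

/-- The number of cycles of a permutation (fixed points included). -/
def cyc {n : ℕ} (σ : Equiv.Perm (Fin n)) : ℕ :=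
  σ.cycleType.card + (Finset.univ.filter fun i : Fin n => σ i = i).card

/-- The `α`-permanent of a square matrix: `Σ_σ α^{cyc(σ)} Π_i h_{i,σ(i)}`. -/
noncomputable def permAlpha {n : ℕ} {R : Type*} [CommRing R]
    (H : Matrix (Fin n) (Fin n) R) (α : R) : R :=
  ∑ σ : Equiv.Perm (Fin n), α ^ cyc σ * ∏ i : Fin n, H i (σ i)

/-- A Ferrers matrix: a `{0,1}`-matrix weakly decreasing down columns and
weakly increasing from left to right across rows. -/
def Ferrers {m n : ℕ} (A : Matrix (Fin m) (Fin n) ℝ) : Prop :=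
  (∀ i j, A i j = 0 ∨ A i j = 1) ∧
  (∀ i i' j, i ≤ i' → A i' j ≤ A i j) ∧
  (∀ i j j', j ≤ j' → A i j ≤ A i j')

/-- The matrix `B(A;x;y)` with entries `b_{ij} = a_{ij} y_j + (1 - a_{ij}) x_i`,
where `Sum.inl i` is the row variable `x_i` and `Sum.inr j` is the column
variable `y_j`. -/
noncomputable def Bmat {m n : ℕ} (A : Matrix (Fin m) (Fin n) ℝ) :
    Matrix (Fin m) (Fin n) (MvPolynomial (Fin m ⊕ Fin n) ℝ) :=
  fun i j => MvPolynomial.C (A i j) * MvPolynomial.X (Sum.inr j) +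
    MvPolynomial.C (1 - A i j) * MvPolynomial.X (Sum.inl i)

/-! ### Auxiliary lemmas on permutation cycle counts -/

section PermAux

open Equiv Equiv.Perm Finset

variable {β : Type*} [Fintype β] [DecidableEq β]

/-- Multiplying by a transposition that joins a fixed point `a` into the cycle of `p`
keeps the number of nontrivial cycles. -/
lemma cycleType_card_swap_mul_of_mem {σ : Perm β} {a p : β}
    (ha : σ a = a) (hap : p ≠ a) (hp : σ p ≠ p) :
    (Equiv.swap a p * σ).cycleType.card = σ.cycleType.card := by
  classical
  set c : Perm β := σ.cycleOf p with hc
  have hpsupp : p ∈ σ.support := Equiv.Perm.mem_support.2 hp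
  have hcmem : c ∈ σ.cycleFactorsFinset :=
    (Equiv.Perm.cycleOf_mem_cycleFactorsFinset_iff).2 hpsupp
  have hccyc : c.IsCycle := Equiv.Perm.isCycle_cycleOf σ hp
  have hd : (σ * c⁻¹).Disjoint c :=
    Equiv.Perm.disjoint_mul_inv_of_mem_cycleFactorsFinset hcmem
  have hasupp : a ∉ σ.support := by simp [Equiv.Perm.mem_support, ha]
  have hca : c a = a := by
    have : a ∉ c.support := fun h => hasupp (Equiv.Perm.mem_cycleFactorsFinset_support_le hcmem h)
    simpa [Equiv.Perm.mem_support, not_not] using this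
  have hcp : c p = σ p := Equiv.Perm.cycleOf_apply_self σ p
  have hdp : (σ * c⁻¹) p = p := by
    rcases hd p with h | h
    · exact h
    · exact absurd h (by rw [hcp]; exact hp)
  have hda : (σ * c⁻¹) a = a := by
    have : c⁻¹ a = a := (Equiv.Perm.inv_eq_iff_eq).mpr hca.symm
    simp [Equiv.Perm.mul_apply, this, ha]
  -- the decomposition
  have hσ : (σ * c⁻¹) * c = σ := by group
  -- swap a p commutes with σ * c⁻¹
  have hcomm : Commute (Equiv.swap a p) (σ * c⁻¹) := by
    refine Equiv.Perm.Disjoint.commute (fun x => ?_)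
    by_cases hx : x = a
    · right; rw [hx]; exact hda
    by_cases hx' : x = p
    · right; rw [hx']; exact hdp
    · left; exact Equiv.swap_apply_of_ne_of_ne hx hx'
  have key : Equiv.swap a p * σ = (σ * c⁻¹) * (Equiv.swap a p * c) := by
    rw [← mul_assoc, ← hcomm.eq, mul_assoc, hσ]
  -- swap a p * c is a cycle
  have hlist : ∃ t : List β, σ.toList p = p :: t := by
    have hne : σ.toList p ≠ [] := by
      simp [Equiv.Perm.toList_eq_nil_iff, hpsupp]
    cases hl : σ.toList p with
    | nil => exact absurd hl hne
    | cons hd t =>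
      have hhd : hd = p := by
        have h0 := Equiv.Perm.getElem_toList σ p 0 (by rw [hl]; simp)
        simpa [hl] using h0
      exact ⟨t, by rw [hhd]⟩
  obtain ⟨t, ht⟩ := hlist
  have hform : (p :: t).formPerm = c := by
    rw [← ht]; exact Equiv.Perm.formPerm_toList σ p
  have hanotin : a ∉ σ.toList p := by
    intro hmem
    have h1 := (Equiv.Perm.mem_toList_iff).1 hmem
    have := (h1.1.mem_support_iff).1 hpsupp
    exact hasupp this
  have hnodup : (a :: p :: t).Nodup := by
    rw [ht] at hanotin
    have := Equiv.Perm.nodup_toList σ p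
    rw [ht] at this
    exact List.nodup_cons.2 ⟨hanotin, this⟩
  have hcycle : (Equiv.swap a p * c).IsCycle := by
    rw [← hform, ← List.formPerm_cons_cons]
    exact List.isCycle_formPerm hnodup (by simp)
  -- disjointness of σ * c⁻¹ and swap a p * c
  have hd2 : (σ * c⁻¹).Disjoint (Equiv.swap a p * c) := by
    intro x
    by_cases hx : (σ * c⁻¹) x = x
    · left; exact hx
    · right
      have hcx : c x = x := (hd x).resolve_left hx
      have hxa : x ≠ a := fun h => hx (h ▸ hda)
      have hxp : x ≠ p := fun h => hx (h ▸ hdp)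
      simp [Equiv.Perm.mul_apply, hcx, Equiv.swap_apply_of_ne_of_ne hxa hxp]
  have e1 : (Equiv.swap a p * σ).cycleType
      = (σ * c⁻¹).cycleType + (Equiv.swap a p * c).cycleType := by
    rw [key]; exact hd2.cycleType_mul
  have e2 : σ.cycleType = (σ * c⁻¹).cycleType + c.cycleType := by
    conv_lhs => rw [← hσ]
    exact hd.cycleType_mul
  rw [e1, e2, Multiset.card_add, Multiset.card_add, hcycle.cycleType, hccyc.cycleType]
  simp

lemma cycleType_card_swap_mul_of_fixed {σ : Perm β} {a p : β}
    (ha : σ a = a) (hap : p ≠ a) (hp : σ p = p) :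
    (Equiv.swap a p * σ).cycleType.card = σ.cycleType.card + 1 := by
  classical
  have hd : (Equiv.swap a p).Disjoint σ := by
    intro x
    by_cases hx : x = a
    · right; rw [hx]; exact ha
    by_cases hx' : x = p
    · right; rw [hx']; exact hp
    · left; exact Equiv.swap_apply_of_ne_of_ne hx hx'
  rw [hd.cycleType_mul, Multiset.card_add,
    (Equiv.Perm.isCycle_swap (Ne.symm hap)).cycleType]
  simp [add_comm]

def castSuccEquiv (m : ℕ) : Fin m ≃ {x : Fin (m + 1) // (x : ℕ) < m} where
  toFun i := ⟨i.castSucc, by simp⟩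
  invFun x := ⟨(x : Fin (m+1)), x.2⟩
  left_inv i := by ext; simp
  right_inv x := by ext; simp [Fin.castSucc]

def extPerm {m : ℕ} (σ : Equiv.Perm (Fin m)) : Equiv.Perm (Fin (m + 1)) :=
  σ.extendDomain (castSuccEquiv m)

lemma extPerm_castSucc {m : ℕ} (σ : Equiv.Perm (Fin m)) (i : Fin m) :
    extPerm σ i.castSucc = (σ i).castSucc := by
  have := Equiv.Perm.extendDomain_apply_subtype σ (castSuccEquiv m) (b := i.castSucc)
    (by simp)
  simpa [extPerm, castSuccEquiv] using this

lemma extPerm_last {m : ℕ} (σ : Equiv.Perm (Fin m)) :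
    extPerm σ (Fin.last m) = Fin.last m :=
  Equiv.Perm.extendDomain_apply_not_subtype σ (castSuccEquiv m) (by simp)

lemma filter_fixed_card_ext {m : ℕ} (σ : Equiv.Perm (Fin m)) :
    (Finset.univ.filter fun i : Fin (m+1) => extPerm σ i = i).card
      = (Finset.univ.filter fun i : Fin m => σ i = i).card + 1 := by
  rw [Finset.card_filter, Finset.card_filter, Fin.sum_univ_castSucc]
  simp [extPerm_castSucc, extPerm_last, Fin.castSucc_inj]

lemma cyc_extPerm {m : ℕ} (σ : Equiv.Perm (Fin m)) : cyc (extPerm σ) = cyc σ + 1 := by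
  unfold cyc
  rw [filter_fixed_card_ext,
    show (extPerm σ).cycleType = σ.cycleType from Equiv.Perm.cycleType_extendDomain _]
  omega

lemma cyc_swap_mul_extPerm {m : ℕ} (σ : Equiv.Perm (Fin m)) (q : Fin m) :
    cyc (Equiv.swap (Fin.last m) q.castSucc * extPerm σ) = cyc σ := by
  classical
  have hql : (q.castSucc : Fin (m+1)) ≠ Fin.last m := (Fin.castSucc_lt_last q).ne
  have hfix : extPerm σ (Fin.last m) = Fin.last m := extPerm_last σ
  have hfixcard : (Finset.univ.filter fun i : Fin (m+1) =>
      (Equiv.swap (Fin.last m) q.castSucc * extPerm σ) i = i).card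
      = (Finset.univ.filter fun i : Fin m => σ i = i ∧ i ≠ q).card := by
    rw [Finset.card_filter, Finset.card_filter, Fin.sum_univ_castSucc]
    have hlastterm : (Equiv.swap (Fin.last m) q.castSucc * extPerm σ) (Fin.last m)
        = q.castSucc := by
      simp [Equiv.Perm.mul_apply, hfix]
    rw [hlastterm]
    simp only [if_neg hql, add_zero]
    refine Finset.sum_congr rfl fun i _ => ?_
    by_cases hiq : σ i = q
    · have : (Equiv.swap (Fin.last m) q.castSucc * extPerm σ) i.castSucc = Fin.last m := by
        simp [Equiv.Perm.mul_apply, extPerm_castSucc, hiq]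
      rw [this]
      have h1 : (Fin.last m) ≠ i.castSucc := (Fin.castSucc_lt_last i).ne'
      have h2 : ¬ (σ i = i ∧ i ≠ q) := by
        rintro ⟨h, h'⟩
        exact h' (by rw [← hiq, h])
      simp [if_neg h1, if_neg h2]
    · have h3 : (σ i).castSucc ≠ q.castSucc := by
        simpa [Fin.castSucc_inj] using hiq
      have : (Equiv.swap (Fin.last m) q.castSucc * extPerm σ) i.castSucc = (σ i).castSucc := by
        simp only [Equiv.Perm.mul_apply, extPerm_castSucc]
        exact Equiv.swap_apply_of_ne_of_ne (Fin.castSucc_lt_last (σ i)).ne h3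
      rw [this]
      by_cases hsi : σ i = i
      · have hiq' : i ≠ q := fun h => hiq (hsi.trans h)
        simp [hsi, Fin.castSucc_inj, hiq']
      · simp [Fin.castSucc_inj, hsi]
  have hct : (extPerm σ).cycleType = σ.cycleType := Equiv.Perm.cycleType_extendDomain _
  by_cases hq : σ q = q
  · have hcard := cycleType_card_swap_mul_of_fixed (σ := extPerm σ)
      (a := Fin.last m) (p := q.castSucc) hfix hql
      (by rw [extPerm_castSucc, hq])
    have hqmem : q ∈ Finset.univ.filter fun i : Fin m => σ i = i := by simp [hq]
    have hsetq : (Finset.univ.filter fun i : Fin m => σ i = i ∧ i ≠ q)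
        = (Finset.univ.filter fun i : Fin m => σ i = i).erase q := by
      ext i
      simp [Finset.mem_erase, and_comm]
    have hle : 1 ≤ (Finset.univ.filter fun i : Fin m => σ i = i).card :=
      Finset.card_pos.2 ⟨q, hqmem⟩
    unfold cyc
    rw [hfixcard, hcard, hct, hsetq, Finset.card_erase_of_mem hqmem]
    omega
  · have hcard := cycleType_card_swap_mul_of_mem (σ := extPerm σ)
      (a := Fin.last m) (p := q.castSucc) hfix hql
      (by rw [extPerm_castSucc]; simpa [Fin.castSucc_inj] using hq)
    have hset : (Finset.univ.filter fun i : Fin m => σ i = i ∧ i ≠ q)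
        = (Finset.univ.filter fun i : Fin m => σ i = i) := by
      ext i
      simp only [Finset.mem_filter, Finset.mem_univ, true_and, and_iff_left_iff_imp]
      exact fun h hh => hq (hh ▸ h)
    unfold cyc
    rw [hfixcard, hcard, hct, hset]

/-- decomposition map -/
def Fmap {m : ℕ} (pσ : Fin (m+1) × Equiv.Perm (Fin m)) : Equiv.Perm (Fin (m+1)) :=
  Equiv.swap (Fin.last m) pσ.1 * extPerm pσ.2

lemma Fmap_last {m : ℕ} (p : Fin (m+1)) (σ : Equiv.Perm (Fin m)) :
    Fmap (p, σ) (Fin.last m) = p := by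
  simp [Fmap, Equiv.Perm.mul_apply, extPerm_last]

lemma Fmap_castSucc {m : ℕ} (p : Fin (m+1)) (σ : Equiv.Perm (Fin m)) (i : Fin m) :
    Fmap (p, σ) i.castSucc = Equiv.swap (Fin.last m) p ((σ i).castSucc) := by
  simp [Fmap, Equiv.Perm.mul_apply, extPerm_castSucc]

lemma extPerm_injective {m : ℕ} : Function.Injective (extPerm (m := m)) := by
  intro σ τ h
  ext i
  have h2 := congrArg (fun f : Equiv.Perm (Fin (m+1)) => f i.castSucc) h
  simp only [extPerm_castSucc] at h2
  exact congrArg Fin.val (Fin.castSucc_inj.1 h2)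

lemma Fmap_bijective {m : ℕ} : Function.Bijective (Fmap (m := m)) := by
  rw [Fintype.bijective_iff_injective_and_card]
  constructor
  · rintro ⟨p, σ⟩ ⟨p', σ'⟩ h
    have hp : p = p' := by
      rw [← Fmap_last p σ, ← Fmap_last p' σ', h]
    subst hp
    have : extPerm σ = extPerm σ' := by
      have := h
      unfold Fmap at this
      exact mul_left_cancel this
    exact Prod.ext rfl (extPerm_injective this)
  · simp [Fintype.card_perm, Nat.factorial_succ]

lemma card_filter_coe_lt (M c : ℕ) (hc : c ≤ M) :
    ((Finset.univ : Finset (Fin M)).filter fun i : Fin M => (i : ℕ) < c).card = c := by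
  have : ((Finset.univ : Finset (Fin M)).filter fun i : Fin M => (i : ℕ) < c)
      = Finset.map (Fin.castLEEmb hc) Finset.univ := by
    ext i
    simp only [Finset.mem_filter, Finset.mem_univ, true_and, Finset.mem_map]
    constructor
    · intro hi
      exact ⟨⟨(i : ℕ), hi⟩, by ext; simp⟩
    · rintro ⟨j, -, rfl⟩
      simp
  rw [this, Finset.card_map, Finset.card_univ, Fintype.card_fin]

lemma pderiv_finset_prod {ι : Type*} [DecidableEq ι] {τ : Type*} {R : Type*} [CommSemiring R]
    [DecidableEq τ] (v : τ) (s : Finset ι) (g : ι → MvPolynomial τ R) :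
    MvPolynomial.pderiv v (∏ i ∈ s, g i)
      = ∑ i ∈ s, MvPolynomial.pderiv v (g i) * ∏ l ∈ s.erase i, g l := by
  classical
  induction s using Finset.induction_on with
  | empty => simp
  | @insert a s ha ih =>
    rw [Finset.prod_insert ha, MvPolynomial.pderiv_mul, ih, Finset.sum_insert ha,
      Finset.erase_insert ha, Finset.mul_sum]
    congr 1
    refine Finset.sum_congr rfl fun i hi => ?_
    have hia : a ≠ i := fun h => ha (h ▸ hi)
    rw [Finset.erase_insert_of_ne hia, Finset.prod_insert
      (fun h => ha (Finset.mem_of_mem_erase h))]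
    ring

end PermAux

set_option maxHeartbeats 2000000 in
/-- Differential recurrence for the `α`-permanent: if `A` is an `n × n` Ferrers
matrix (`n = m+1`) with `a_{nn} = 0`, `k` is the number of `0`'s in the last
column, and `A°` is obtained by deleting the last row and column, then
`per(B(A);α) = (α + k - 1) xₙ per(B(A°);α) + xₙ yₙ ∂ per(B(A°);α)`, where
`∂ = Σ_{i=1}^{n-k} ∂/∂x_i + Σ_{j=1}^{n-1} ∂/∂y_j` (stated for all real `α`,
which is equivalent to the identity with `α` an indeterminate). -/
theorem alpha_diff_recurrence (m : ℕ) (A : Matrix (Fin (m + 1)) (Fin (m + 1)) ℝ)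
    (hA : Ferrers A) (hlast : A (Fin.last m) (Fin.last m) = 0)
    (k : ℕ)
    (hk : k = (Finset.univ.filter (fun i : Fin (m + 1) => A i (Fin.last m) = 0)).card)
    (hk1 : 1 ≤ k) :
    ∀ α : ℝ,
      ∀ P : MvPolynomial (Fin (m + 1) ⊕ Fin (m + 1)) ℝ,
        P = MvPolynomial.rename (Sum.map Fin.castSucc Fin.castSucc)
            (permAlpha (Bmat (fun i j : Fin m => A i.castSucc j.castSucc))
              (MvPolynomial.C α)) →
      permAlpha (Bmat A) (MvPolynomial.C α) =
        MvPolynomial.C (α + (k : ℝ) - 1) * MvPolynomial.X (Sum.inl (Fin.last m)) * P +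
          MvPolynomial.X (Sum.inl (Fin.last m)) * MvPolynomial.X (Sum.inr (Fin.last m)) *
            ((∑ i ∈ Finset.univ.filter (fun i : Fin (m + 1) => (i : ℕ) < m + 1 - k),
                MvPolynomial.pderiv (Sum.inl i) P) +
              ∑ j : Fin m, MvPolynomial.pderiv (Sum.inr j.castSucc) P) := by
  classical
  intro α P hP
  obtain ⟨h01, hcol, hrow⟩ := hA
  set L : Fin (m+1) := Fin.last m with hL
  have hklem : k ≤ m + 1 := by
    rw [hk]
    calc (Finset.univ.filter (fun i : Fin (m + 1) => A i (Fin.last m) = 0)).card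
        ≤ (Finset.univ : Finset (Fin (m+1))).card := Finset.card_filter_le _ _
      _ = m + 1 := by simp
  have hup : ∀ i i' : Fin (m+1), i ≤ i' → A i L = 0 → A i' L = 0 := by
    intro i i' h h0
    rcases h01 i' L with h' | h'
    · exact h'
    · exfalso; have := hcol i i' L h; rw [h', h0] at this; linarith
  have hAcol : ∀ i : Fin (m+1), A i L = 0 ↔ m + 1 - k ≤ (i : ℕ) := by
    intro i
    constructor
    · intro h0
      have hsub : Finset.Ici i ⊆ Finset.univ.filter (fun x : Fin (m+1) => A x L = 0) := by
        intro z hz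
        simp only [Finset.mem_filter, Finset.mem_univ, true_and]
        exact hup i z (Finset.mem_Ici.1 hz) h0
      have hcard := Finset.card_le_card hsub
      rw [Fin.card_Ici, ← hk] at hcard
      have hi : (i : ℕ) ≤ m := Fin.is_le i
      omega
    · intro hge
      by_contra h0
      have hsub : Finset.univ.filter (fun z : Fin (m+1) => A z L = 0) ⊆ Finset.Ioi i := by
        intro z hz
        simp only [Finset.mem_filter, Finset.mem_univ, true_and] at hz
        rw [Finset.mem_Ioi]
        by_contra hzi
        push_neg at hzi
        exact h0 (hup z i hzi hz)
      have hcard := Finset.card_le_card hsub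
      rw [Fin.card_Ioi, ← hk] at hcard
      have hi : (i : ℕ) ≤ m := Fin.is_le i
      omega
  have hrow0 : ∀ i : Fin (m+1), A i L = 0 → ∀ j, A i j = 0 := by
    intro i h0 j
    rcases h01 i j with h | h
    · exact h
    · exfalso; have := hrow i j L (Fin.le_last j); rw [h, h0] at this; linarith
  have hAone : ∀ i : Fin (m+1), (i : ℕ) < m + 1 - k → A i L = 1 := by
    intro i hi
    rcases h01 i L with h | h
    · exfalso; rw [hAcol i] at h; omega
    · exact h
  have hB0 : ∀ (i j : Fin (m+1)), A i j = 0 → Bmat A i j = X (Sum.inl i) := by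
    intro i j h; simp [Bmat, h]
  have hB1 : ∀ (i j : Fin (m+1)), A i j = 1 → Bmat A i j = X (Sum.inr j) := by
    intro i j h; simp [Bmat, h]
  set x : MvPolynomial (Fin (m+1) ⊕ Fin (m+1)) ℝ := X (Sum.inl L) with hx
  set y : MvPolynomial (Fin (m+1) ⊕ Fin (m+1)) ℝ := X (Sum.inr L) with hy
  set b : Equiv.Perm (Fin m) → Fin m → MvPolynomial (Fin (m+1) ⊕ Fin (m+1)) ℝ :=
    fun σ i => Bmat A i.castSucc ((σ i).castSucc) with hb
  set G : Equiv.Perm (Fin m) → MvPolynomial (Fin (m+1) ⊕ Fin (m+1)) ℝ :=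
    fun σ => ∏ i : Fin m, b σ i with hG
  set T : Finset (Fin m) := Finset.univ.filter (fun i : Fin m => (i : ℕ) < m + 1 - k) with hT
  set E : Equiv.Perm (Fin m) → MvPolynomial (Fin (m+1) ⊕ Fin (m+1)) ℝ :=
    fun σ => ∑ i ∈ T, ∏ l ∈ Finset.univ.erase i, b σ l with hE
  -- explicit form of P
  have hPdef : P = ∑ σ : Equiv.Perm (Fin m), (C α) ^ cyc σ * G σ := by
    rw [hP]
    unfold permAlpha
    rw [map_sum]
    refine Finset.sum_congr rfl fun σ _ => ?_
    rw [map_mul, map_pow, rename_C]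
    congr 1
    rw [map_prod]
    refine Finset.prod_congr rfl fun i _ => ?_
    simp [Bmat, hb]
  -- derivative of G
  have hDG : ∀ (σ : Equiv.Perm (Fin m)) (v : Fin (m+1) ⊕ Fin (m+1)),
      pderiv v (G σ) = ∑ i : Fin m, pderiv v (b σ i) * ∏ l ∈ Finset.univ.erase i, b σ l :=
    fun σ v => pderiv_finset_prod v Finset.univ (b σ)
  have hpd_inl : ∀ (σ : Equiv.Perm (Fin m)) (i : Fin m),
      (∑ i' ∈ Finset.univ.filter (fun i' : Fin (m+1) => (i' : ℕ) < m + 1 - k),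
        pderiv (Sum.inl i') (b σ i))
      = if (i : ℕ) < m + 1 - k then C (1 - A i.castSucc ((σ i).castSucc)) else 0 := by
    intro σ i
    have hstep : ∀ i' : Fin (m+1), pderiv (Sum.inl i') (b σ i)
        = if i' = i.castSucc then C (1 - A i.castSucc ((σ i).castSucc)) else 0 := by
      intro i'
      by_cases h : i' = i.castSucc
      · subst h
        simp [hb, Bmat, pderiv_C_mul]
      · have h' : i.castSucc ≠ i' := Ne.symm h
        simp [hb, Bmat, pderiv_C_mul, h, h']
    rw [Finset.sum_congr rfl (fun i' _ => hstep i'), Finset.sum_ite_eq']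
    simp
  have hpd_inr : ∀ (σ : Equiv.Perm (Fin m)) (i : Fin m),
      (∑ j : Fin m, pderiv (Sum.inr j.castSucc) (b σ i))
      = C (A i.castSucc ((σ i).castSucc)) := by
    intro σ i
    have hstep : ∀ j : Fin m, pderiv (Sum.inr j.castSucc) (b σ i)
        = if j = σ i then C (A i.castSucc ((σ i).castSucc)) else 0 := by
      intro j
      by_cases h : j = σ i
      · subst h
        simp [hb, Bmat, pderiv_C_mul]
      · have h' : (σ i).castSucc ≠ j.castSucc := by simpa [Fin.castSucc_inj] using Ne.symm h
        simp [hb, Bmat, pderiv_C_mul, h, h']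
    rw [Finset.sum_congr rfl (fun j _ => hstep j), Finset.sum_ite_eq']
    simp
  have hcoef : ∀ (σ : Equiv.Perm (Fin m)) (i : Fin m),
      ((∑ i' ∈ Finset.univ.filter (fun i' : Fin (m+1) => (i' : ℕ) < m + 1 - k),
        pderiv (Sum.inl i') (b σ i)) + ∑ j : Fin m, pderiv (Sum.inr j.castSucc) (b σ i))
      = if (i : ℕ) < m + 1 - k then 1 else 0 := by
    intro σ i
    rw [hpd_inl, hpd_inr]
    by_cases h : (i : ℕ) < m + 1 - k
    · rw [if_pos h, if_pos h, ← map_add]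
      norm_num
    · rw [if_neg h, if_neg h, zero_add]
      have h0 : A i.castSucc ((σ i).castSucc) = 0 :=
        hrow0 i.castSucc ((hAcol i.castSucc).2 (by simpa using Nat.le_of_not_lt h)) _
      rw [h0, map_zero]
  have hW : ∀ σ : Equiv.Perm (Fin m),
      ((∑ i' ∈ Finset.univ.filter (fun i' : Fin (m+1) => (i' : ℕ) < m + 1 - k),
        pderiv (Sum.inl i') (G σ)) + ∑ j : Fin m, pderiv (Sum.inr j.castSucc) (G σ))
      = E σ := by
    intro σ
    have e1 : (∑ i' ∈ Finset.univ.filter (fun i' : Fin (m+1) => (i' : ℕ) < m + 1 - k),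
          pderiv (Sum.inl i') (G σ))
        = ∑ i : Fin m, ∑ i' ∈ Finset.univ.filter (fun i' : Fin (m+1) => (i' : ℕ) < m + 1 - k),
            pderiv (Sum.inl i') (b σ i) * ∏ l ∈ Finset.univ.erase i, b σ l := by
      rw [Finset.sum_congr rfl (fun i' _ => hDG σ (Sum.inl i'))]
      exact Finset.sum_comm
    have e2 : (∑ j : Fin m, pderiv (Sum.inr j.castSucc) (G σ))
        = ∑ i : Fin m, ∑ j : Fin m,
            pderiv (Sum.inr j.castSucc) (b σ i) * ∏ l ∈ Finset.univ.erase i, b σ l := by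
      rw [Finset.sum_congr rfl (fun j _ => hDG σ (Sum.inr j.castSucc))]
      exact Finset.sum_comm
    rw [e1, e2, ← Finset.sum_add_distrib]
    have step1 : ∀ i : Fin m, ((∑ i' ∈ Finset.univ.filter
          (fun i' : Fin (m+1) => (i' : ℕ) < m + 1 - k),
        pderiv (Sum.inl i') (b σ i) * ∏ l ∈ Finset.univ.erase i, b σ l)
        + ∑ j : Fin m, pderiv (Sum.inr j.castSucc) (b σ i) * ∏ l ∈ Finset.univ.erase i, b σ l)
        = (if (i : ℕ) < m + 1 - k then 1 else 0) * ∏ l ∈ Finset.univ.erase i, b σ l := by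
      intro i
      rw [← Finset.sum_mul, ← Finset.sum_mul, ← add_mul, hcoef]
    rw [Finset.sum_congr rfl (fun i _ => step1 i), hE]
    simp only [hT, ite_mul, one_mul, zero_mul]
    exact (Finset.sum_filter _ _).symm
  -- derivative of P
  have hS : ((∑ i ∈ Finset.univ.filter (fun i : Fin (m+1) => (i : ℕ) < m + 1 - k),
        pderiv (Sum.inl i) P) + ∑ j : Fin m, pderiv (Sum.inr j.castSucc) P)
      = ∑ σ : Equiv.Perm (Fin m), (C α) ^ cyc σ * E σ := by
    rw [hPdef]
    simp only [map_sum]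
    rw [Finset.sum_comm, Finset.sum_comm
        (s := (Finset.univ : Finset (Fin m))) (t := (Finset.univ : Finset (Equiv.Perm (Fin m)))),
      ← Finset.sum_add_distrib]
    refine Finset.sum_congr rfl fun σ _ => ?_
    have hCpull : ∀ v : Fin (m+1) ⊕ Fin (m+1),
        pderiv v ((C α) ^ cyc σ * G σ) = (C α) ^ cyc σ * pderiv v (G σ) := by
      intro v
      rw [← C_pow, pderiv_C_mul, C_pow]
    simp only [hCpull]
    rw [← Finset.mul_sum, ← Finset.mul_sum, ← mul_add, hW σ]
  -- the sum decomposition of the LHS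
  have hbij := Fintype.sum_bijective Fmap (Fmap_bijective (m := m))
    (fun pσ => (C α) ^ cyc (Fmap pσ) * ∏ i : Fin (m+1), Bmat A i (Fmap pσ i))
    (fun τ => (C α) ^ cyc τ * ∏ i : Fin (m+1), Bmat A i (τ i))
    (fun pσ => rfl)
  have hL1 : permAlpha (Bmat A) (C α)
      = ∑ p : Fin (m+1), ∑ σ : Equiv.Perm (Fin m),
          (C α) ^ cyc (Fmap (p, σ)) * ∏ i : Fin (m+1), Bmat A i (Fmap (p, σ) i) := by
    unfold permAlpha
    rw [← hbij, Fintype.sum_prod_type]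
  rw [Fin.sum_univ_castSucc] at hL1
  -- the last summand (p = last)
  have hlastsum : (∑ σ : Equiv.Perm (Fin m),
      (C α) ^ cyc (Fmap (Fin.last m, σ)) * ∏ i : Fin (m+1), Bmat A i (Fmap (Fin.last m, σ) i))
      = ∑ σ : Equiv.Perm (Fin m), (C α) ^ (cyc σ + 1) * (G σ * x) := by
    refine Finset.sum_congr rfl fun σ _ => ?_
    have hFm : Fmap (Fin.last m, σ) = extPerm σ := by
      show Equiv.swap (Fin.last m) (Fin.last m) * extPerm σ = extPerm σ
      rw [Equiv.swap_self]
      exact one_mul _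
    rw [hFm, cyc_extPerm]
    congr 1
    rw [Fin.prod_univ_castSucc]
    congr 1
    · exact Finset.prod_congr rfl fun i _ => by rw [extPerm_castSucc]
    · rw [extPerm_last]
      rw [hx]
      exact hB0 L L hlast
  -- the other summands (p = q.castSucc)
  have hqsum : (∑ q : Fin m, ∑ σ : Equiv.Perm (Fin m),
      (C α) ^ cyc (Fmap (q.castSucc, σ)) * ∏ i : Fin (m+1), Bmat A i (Fmap (q.castSucc, σ) i))
      = ∑ σ : Equiv.Perm (Fin m),
          (C α) ^ cyc σ * ((y * E σ + C ((k : ℝ) - 1) * G σ) * x) := by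
    rw [Finset.sum_comm]
    refine Finset.sum_congr rfl fun σ _ => ?_
    have hcycq : ∀ q : Fin m, cyc (Fmap (q.castSucc, σ)) = cyc σ :=
      fun q => cyc_swap_mul_extPerm σ q
    have hprodq : ∀ q : Fin m, (∏ i : Fin (m+1), Bmat A i (Fmap (q.castSucc, σ) i))
        = (Bmat A (σ.symm q).castSucc L * ∏ l ∈ Finset.univ.erase (σ.symm q), b σ l) * x := by
      intro q
      rw [Fin.prod_univ_castSucc]
      congr 1
      · rw [← Finset.mul_prod_erase Finset.univ
          (fun i : Fin m => Bmat A i.castSucc (Fmap (q.castSucc, σ) i.castSucc))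
          (Finset.mem_univ (σ.symm q))]
        congr 1
        · rw [Fmap_castSucc, Equiv.apply_symm_apply, Equiv.swap_apply_right]
        · refine Finset.prod_congr rfl fun l hl => ?_
          have hlne : l ≠ σ.symm q := (Finset.mem_erase.1 hl).1
          have h1 : (σ l).castSucc ≠ q.castSucc := by
            rw [Ne, Fin.castSucc_inj]
            intro hh
            exact hlne (by rw [← hh, Equiv.symm_apply_apply])
          rw [Fmap_castSucc, Equiv.swap_apply_of_ne_of_ne (Fin.castSucc_lt_last (σ l)).ne h1]
      · rw [Fmap_last, hx]
        exact hB0 L q.castSucc (hrow0 L hlast q.castSucc)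
    calc (∑ q : Fin m, (C α) ^ cyc (Fmap (q.castSucc, σ))
            * ∏ i : Fin (m+1), Bmat A i (Fmap (q.castSucc, σ) i))
        = (C α) ^ cyc σ * ((∑ q : Fin m, Bmat A (σ.symm q).castSucc L
            * ∏ l ∈ Finset.univ.erase (σ.symm q), b σ l) * x) := by
          rw [Finset.sum_mul, Finset.mul_sum]
          refine Finset.sum_congr rfl fun q _ => ?_
          rw [hcycq, hprodq]
      _ = (C α) ^ cyc σ * ((∑ i : Fin m, Bmat A i.castSucc L
            * ∏ l ∈ Finset.univ.erase i, b σ l) * x) := by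
          rw [Equiv.sum_comp σ.symm
            (fun i => Bmat A i.castSucc L * ∏ l ∈ Finset.univ.erase i, b σ l)]
      _ = (C α) ^ cyc σ * ((y * E σ + C ((k : ℝ) - 1) * G σ) * x) := by
          congr 2
          rw [← Finset.sum_filter_add_sum_filter_not Finset.univ
            (fun i : Fin m => (i : ℕ) < m + 1 - k)]
          congr 1
          · rw [hE]
            simp only [hT]
            rw [Finset.mul_sum]
            refine Finset.sum_congr rfl fun i hi => ?_
            have h1 : A i.castSucc L = 1 := by
              refine hAone i.castSucc ?_
              have := (Finset.mem_filter.1 hi).2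
              simpa using this
            rw [hB1 _ _ h1, hy]
          · have hcards : (Finset.univ.filter
                (fun i : Fin m => ¬ (i : ℕ) < m + 1 - k)).card = k - 1 := by
              have h1 := Finset.card_filter_add_card_filter_not
                (s := (Finset.univ : Finset (Fin m)))
                (p := fun i : Fin m => (i : ℕ) < m + 1 - k)
              rw [card_filter_coe_lt m (m + 1 - k) (by omega)] at h1
              simp only [Finset.card_univ, Fintype.card_fin] at h1
              omega
            calc (∑ i ∈ Finset.univ.filter (fun i : Fin m => ¬ (i : ℕ) < m + 1 - k),
                    Bmat A i.castSucc L * ∏ l ∈ Finset.univ.erase i, b σ l)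
                = ∑ _i ∈ Finset.univ.filter (fun i : Fin m => ¬ (i : ℕ) < m + 1 - k), G σ := by
                  refine Finset.sum_congr rfl fun i hi => ?_
                  have hge : m + 1 - k ≤ (i : ℕ) := by
                    have := (Finset.mem_filter.1 hi).2
                    omega
                  have h0 : A i.castSucc L = 0 := (hAcol i.castSucc).2 (by simpa using hge)
                  have h0' : A i.castSucc ((σ i).castSucc) = 0 := hrow0 _ h0 _
                  rw [hB0 _ _ h0]
                  have hbi : (X (Sum.inl i.castSucc)
                      : MvPolynomial (Fin (m+1) ⊕ Fin (m+1)) ℝ) = b σ i := by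
                    rw [hb]
                    exact (hB0 _ _ h0').symm
                  rw [hbi, hG]
                  exact Finset.mul_prod_erase Finset.univ (b σ) (Finset.mem_univ i)
              _ = C ((k : ℝ) - 1) * G σ := by
                  rw [Finset.sum_const, hcards, nsmul_eq_mul]
                  congr 1
                  have hcast : ((k - 1 : ℕ) : MvPolynomial (Fin (m+1) ⊕ Fin (m+1)) ℝ)
                      = C ((k - 1 : ℕ) : ℝ) := by
                    simp
                  rw [hcast]
                  congr 1
                  push_cast [hk1]
                  ring
  rw [hL1, hqsum, hlastsum, hS, hPdef]
  rw [Finset.mul_sum, Finset.mul_sum, ← Finset.sum_add_distrib, ← Finset.sum_add_distrib]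
  refine Finset.sum_congr rfl fun σ _ => ?_
  have hCsplit : (C (α + (k : ℝ) - 1) : MvPolynomial (Fin (m+1) ⊕ Fin (m+1)) ℝ)
      = C α + C ((k : ℝ) - 1) := by
    rw [show α + (k : ℝ) - 1 = α + ((k : ℝ) - 1) by ring, map_add]
  rw [hCsplit, pow_succ]
  ring
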